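/- Let 𝒜₃ = Av(2143, 2431, 3124, 3412, 23514, 25134, 31452, 35214, 41532, 43152). Then 𝒜₃ is exactly the set of permutations of the form σ[1,…,1,τ] (the inflation of the last point of σ by τ), where σ ranges over Av(213, 231) and τ ranges over Av(132, 312) ∪ {2413, 3142}. -/

import Mathlib

/-- A permutation of length `n ≥ 1` in one-line notation: a nonempty list of
natural numbers that is a rearrangement of `1, …, n` where `n` is its length. -/
def IsPermList (l : List ℕ) : Prop := l ≠ [] ∧ l.Perm (List.range' 1 l.length)

instance (l : List ℕ) : Decidable (IsPermList l) :=
  inferInstanceAs (Decidable (l ≠ [] ∧ l.Perm (List.range' 1 l.length)))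

/-- The type of all (finite, nonempty) permutations. -/
abbrev Permu := {l : List ℕ // IsPermList l}

/-- Helper to construct explicit permutations. -/
def p (l : List ℕ) (h : IsPermList l := by decide) : Permu := ⟨l, h⟩

/-- Pattern containment: `σ` is contained in `τ` when some (not necessarily
contiguous) subsequence of `τ` is order isomorphic to `σ`. -/
def Contains (σ τ : Permu) : Prop :=
  ∃ u : List ℕ, u.Sublist τ.val ∧ u.length = σ.val.length ∧
    ∀ i j : ℕ, i < u.length → j < u.length →
      (u.getD i 0 < u.getD j 0 ↔ σ.val.getD i 0 < σ.val.getD j 0)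

/-- A pattern class: a set of permutations closed downwards under containment. -/
def IsPatternClass (A : Set Permu) : Prop :=
  ∀ σ τ : Permu, τ ∈ A → Contains σ τ → σ ∈ A

/-- `Av B` is the set of permutations containing no member of the set `B`. -/
def Av (B : Set Permu) : Set Permu := {π | ∀ β ∈ B, ¬ Contains β π}

/-- An isomorphism of pattern classes is a bijection which preserves and
reflects containment. -/
def IsIso {A B : Set Permu} (f : ↥A → ↥B) : Prop :=
  Function.Bijective f ∧
  ∀ σ τ : ↥A, Contains σ.val τ.val ↔ Contains (f σ).val (f τ).val

/-- The shadow of `τ`: the permutations of length one less that are contained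
in `τ`. -/
def shadow (τ : Permu) : Set Permu :=
  {σ : Permu | σ.val.length + 1 = τ.val.length ∧ Contains σ τ}
/-- The class 𝒜₃. -/
def A3 : Set Permu := Av
  {p [2,1,4,3], p [2,4,3,1], p [3,1,2,4], p [3,4,1,2],
   p [2,3,5,1,4], p [2,5,1,3,4], p [3,1,4,5,2], p [3,5,2,1,4],
   p [4,1,5,3,2], p [4,3,1,5,2]}
/-- The wedge class Av(132, 312). -/
def V : Set Permu := Av {p [1,3,2], p [3,1,2]}

/-- The wedge class Av(213, 231). -/
def Vup : Set Permu := Av {p [2,1,3], p [2,3,1]}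

/-- The inflation σ[1,…,1,τ] of the last point of σ by τ. -/
def inflateLast (σ τ : List ℕ) : List ℕ :=
  (σ.dropLast.map (fun x => if x < σ.getLast! then x else x + τ.length - 1))
    ++ τ.map (fun y => σ.getLast! - 1 + y)


def Pat (β l : List ℕ) : Prop :=
  ∃ u : List ℕ, u.Sublist l ∧ u.length = β.length ∧
    ∀ i j : ℕ, i < u.length → j < u.length →
      (u.getD i 0 < u.getD j 0 ↔ β.getD i 0 < β.getD j 0)

lemma len3 {l : List ℕ} (h : l.length = 3) : ∃ a b c, l = [a,b,c] :=
  List.length_eq_three.mp h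

lemma len4 {l : List ℕ} (h : l.length = 4) : ∃ a b c d, l = [a,b,c,d] := by
  match l, h with
  | [a,b,c,d], _ => exact ⟨a,b,c,d, rfl⟩

lemma len5 {l : List ℕ} (h : l.length = 5) : ∃ a b c d e, l = [a,b,c,d,e] := by
  match l, h with
  | [a,b,c,d,e], _ => exact ⟨a,b,c,d,e, rfl⟩


lemma pat_132 {l : List ℕ} : Pat [1,3,2] l ↔
    ∃ a b c, [a,b,c].Sublist l ∧ a < c ∧ c < b := by
  constructor
  · rintro ⟨u, hs, hl, h⟩
    obtain ⟨a,b,c, rfl⟩ := len3 hl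
    refine ⟨a,b,c, hs, ?_⟩
    refine ⟨?_, ?_⟩
    · have := h 0 2 (by norm_num) (by norm_num); simp [List.getD] at this; omega
    · have := h 2 1 (by norm_num) (by norm_num); simp [List.getD] at this; omega
  · rintro ⟨a,b,c, hs, hc⟩
    refine ⟨[a,b,c], hs, rfl, ?_⟩
    intro i j hi hj
    simp only [List.length_cons, List.length_nil] at hi hj
    interval_cases i <;> interval_cases j <;> simp [List.getD] <;> omega

lemma pat_312 {l : List ℕ} : Pat [3,1,2] l ↔
    ∃ a b c, [a,b,c].Sublist l ∧ b < c ∧ c < a := by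
  constructor
  · rintro ⟨u, hs, hl, h⟩
    obtain ⟨a,b,c, rfl⟩ := len3 hl
    refine ⟨a,b,c, hs, ?_⟩
    refine ⟨?_, ?_⟩
    · have := h 1 2 (by norm_num) (by norm_num); simp [List.getD] at this; omega
    · have := h 2 0 (by norm_num) (by norm_num); simp [List.getD] at this; omega
  · rintro ⟨a,b,c, hs, hc⟩
    refine ⟨[a,b,c], hs, rfl, ?_⟩
    intro i j hi hj
    simp only [List.length_cons, List.length_nil] at hi hj
    interval_cases i <;> interval_cases j <;> simp [List.getD] <;> omega

lemma pat_213 {l : List ℕ} : Pat [2,1,3] l ↔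
    ∃ a b c, [a,b,c].Sublist l ∧ b < a ∧ a < c := by
  constructor
  · rintro ⟨u, hs, hl, h⟩
    obtain ⟨a,b,c, rfl⟩ := len3 hl
    refine ⟨a,b,c, hs, ?_⟩
    refine ⟨?_, ?_⟩
    · have := h 1 0 (by norm_num) (by norm_num); simp [List.getD] at this; omega
    · have := h 0 2 (by norm_num) (by norm_num); simp [List.getD] at this; omega
  · rintro ⟨a,b,c, hs, hc⟩
    refine ⟨[a,b,c], hs, rfl, ?_⟩
    intro i j hi hj
    simp only [List.length_cons, List.length_nil] at hi hj
    interval_cases i <;> interval_cases j <;> simp [List.getD] <;> omega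

lemma pat_231 {l : List ℕ} : Pat [2,3,1] l ↔
    ∃ a b c, [a,b,c].Sublist l ∧ c < a ∧ a < b := by
  constructor
  · rintro ⟨u, hs, hl, h⟩
    obtain ⟨a,b,c, rfl⟩ := len3 hl
    refine ⟨a,b,c, hs, ?_⟩
    refine ⟨?_, ?_⟩
    · have := h 2 0 (by norm_num) (by norm_num); simp [List.getD] at this; omega
    · have := h 0 1 (by norm_num) (by norm_num); simp [List.getD] at this; omega
  · rintro ⟨a,b,c, hs, hc⟩
    refine ⟨[a,b,c], hs, rfl, ?_⟩
    intro i j hi hj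
    simp only [List.length_cons, List.length_nil] at hi hj
    interval_cases i <;> interval_cases j <;> simp [List.getD] <;> omega

lemma pat_2143 {l : List ℕ} : Pat [2,1,4,3] l ↔
    ∃ a b c d, [a,b,c,d].Sublist l ∧ b < a ∧ a < d ∧ d < c := by
  constructor
  · rintro ⟨u, hs, hl, h⟩
    obtain ⟨a,b,c,d, rfl⟩ := len4 hl
    refine ⟨a,b,c,d, hs, ?_⟩
    refine ⟨?_, ?_, ?_⟩
    · have := h 1 0 (by norm_num) (by norm_num); simp [List.getD] at this; omega
    · have := h 0 3 (by norm_num) (by norm_num); simp [List.getD] at this; omega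
    · have := h 3 2 (by norm_num) (by norm_num); simp [List.getD] at this; omega
  · rintro ⟨a,b,c,d, hs, hc⟩
    refine ⟨[a,b,c,d], hs, rfl, ?_⟩
    intro i j hi hj
    simp only [List.length_cons, List.length_nil] at hi hj
    interval_cases i <;> interval_cases j <;> simp [List.getD] <;> omega

lemma pat_2431 {l : List ℕ} : Pat [2,4,3,1] l ↔
    ∃ a b c d, [a,b,c,d].Sublist l ∧ d < a ∧ a < c ∧ c < b := by
  constructor
  · rintro ⟨u, hs, hl, h⟩
    obtain ⟨a,b,c,d, rfl⟩ := len4 hl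
    refine ⟨a,b,c,d, hs, ?_⟩
    refine ⟨?_, ?_, ?_⟩
    · have := h 3 0 (by norm_num) (by norm_num); simp [List.getD] at this; omega
    · have := h 0 2 (by norm_num) (by norm_num); simp [List.getD] at this; omega
    · have := h 2 1 (by norm_num) (by norm_num); simp [List.getD] at this; omega
  · rintro ⟨a,b,c,d, hs, hc⟩
    refine ⟨[a,b,c,d], hs, rfl, ?_⟩
    intro i j hi hj
    simp only [List.length_cons, List.length_nil] at hi hj
    interval_cases i <;> interval_cases j <;> simp [List.getD] <;> omega

lemma pat_3124 {l : List ℕ} : Pat [3,1,2,4] l ↔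
    ∃ a b c d, [a,b,c,d].Sublist l ∧ b < c ∧ c < a ∧ a < d := by
  constructor
  · rintro ⟨u, hs, hl, h⟩
    obtain ⟨a,b,c,d, rfl⟩ := len4 hl
    refine ⟨a,b,c,d, hs, ?_⟩
    refine ⟨?_, ?_, ?_⟩
    · have := h 1 2 (by norm_num) (by norm_num); simp [List.getD] at this; omega
    · have := h 2 0 (by norm_num) (by norm_num); simp [List.getD] at this; omega
    · have := h 0 3 (by norm_num) (by norm_num); simp [List.getD] at this; omega
  · rintro ⟨a,b,c,d, hs, hc⟩
    refine ⟨[a,b,c,d], hs, rfl, ?_⟩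
    intro i j hi hj
    simp only [List.length_cons, List.length_nil] at hi hj
    interval_cases i <;> interval_cases j <;> simp [List.getD] <;> omega

lemma pat_3412 {l : List ℕ} : Pat [3,4,1,2] l ↔
    ∃ a b c d, [a,b,c,d].Sublist l ∧ c < d ∧ d < a ∧ a < b := by
  constructor
  · rintro ⟨u, hs, hl, h⟩
    obtain ⟨a,b,c,d, rfl⟩ := len4 hl
    refine ⟨a,b,c,d, hs, ?_⟩
    refine ⟨?_, ?_, ?_⟩
    · have := h 2 3 (by norm_num) (by norm_num); simp [List.getD] at this; omega
    · have := h 3 0 (by norm_num) (by norm_num); simp [List.getD] at this; omega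
    · have := h 0 1 (by norm_num) (by norm_num); simp [List.getD] at this; omega
  · rintro ⟨a,b,c,d, hs, hc⟩
    refine ⟨[a,b,c,d], hs, rfl, ?_⟩
    intro i j hi hj
    simp only [List.length_cons, List.length_nil] at hi hj
    interval_cases i <;> interval_cases j <;> simp [List.getD] <;> omega

lemma pat_23514 {l : List ℕ} : Pat [2,3,5,1,4] l ↔
    ∃ a b c d e, [a,b,c,d,e].Sublist l ∧ d < a ∧ a < b ∧ b < e ∧ e < c := by
  constructor
  · rintro ⟨u, hs, hl, h⟩
    obtain ⟨a,b,c,d,e, rfl⟩ := len5 hl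
    refine ⟨a,b,c,d,e, hs, ?_⟩
    refine ⟨?_, ?_, ?_, ?_⟩
    · have := h 3 0 (by norm_num) (by norm_num); simp [List.getD] at this; omega
    · have := h 0 1 (by norm_num) (by norm_num); simp [List.getD] at this; omega
    · have := h 1 4 (by norm_num) (by norm_num); simp [List.getD] at this; omega
    · have := h 4 2 (by norm_num) (by norm_num); simp [List.getD] at this; omega
  · rintro ⟨a,b,c,d,e, hs, hc⟩
    refine ⟨[a,b,c,d,e], hs, rfl, ?_⟩
    intro i j hi hj
    simp only [List.length_cons, List.length_nil] at hi hj
    interval_cases i <;> interval_cases j <;> simp [List.getD] <;> omega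

lemma pat_25134 {l : List ℕ} : Pat [2,5,1,3,4] l ↔
    ∃ a b c d e, [a,b,c,d,e].Sublist l ∧ c < a ∧ a < d ∧ d < e ∧ e < b := by
  constructor
  · rintro ⟨u, hs, hl, h⟩
    obtain ⟨a,b,c,d,e, rfl⟩ := len5 hl
    refine ⟨a,b,c,d,e, hs, ?_⟩
    refine ⟨?_, ?_, ?_, ?_⟩
    · have := h 2 0 (by norm_num) (by norm_num); simp [List.getD] at this; omega
    · have := h 0 3 (by norm_num) (by norm_num); simp [List.getD] at this; omega
    · have := h 3 4 (by norm_num) (by norm_num); simp [List.getD] at this; omega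
    · have := h 4 1 (by norm_num) (by norm_num); simp [List.getD] at this; omega
  · rintro ⟨a,b,c,d,e, hs, hc⟩
    refine ⟨[a,b,c,d,e], hs, rfl, ?_⟩
    intro i j hi hj
    simp only [List.length_cons, List.length_nil] at hi hj
    interval_cases i <;> interval_cases j <;> simp [List.getD] <;> omega

lemma pat_31452 {l : List ℕ} : Pat [3,1,4,5,2] l ↔
    ∃ a b c d e, [a,b,c,d,e].Sublist l ∧ b < e ∧ e < a ∧ a < c ∧ c < d := by
  constructor
  · rintro ⟨u, hs, hl, h⟩
    obtain ⟨a,b,c,d,e, rfl⟩ := len5 hl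
    refine ⟨a,b,c,d,e, hs, ?_⟩
    refine ⟨?_, ?_, ?_, ?_⟩
    · have := h 1 4 (by norm_num) (by norm_num); simp [List.getD] at this; omega
    · have := h 4 0 (by norm_num) (by norm_num); simp [List.getD] at this; omega
    · have := h 0 2 (by norm_num) (by norm_num); simp [List.getD] at this; omega
    · have := h 2 3 (by norm_num) (by norm_num); simp [List.getD] at this; omega
  · rintro ⟨a,b,c,d,e, hs, hc⟩
    refine ⟨[a,b,c,d,e], hs, rfl, ?_⟩
    intro i j hi hj
    simp only [List.length_cons, List.length_nil] at hi hj
    interval_cases i <;> interval_cases j <;> simp [List.getD] <;> omega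

lemma pat_35214 {l : List ℕ} : Pat [3,5,2,1,4] l ↔
    ∃ a b c d e, [a,b,c,d,e].Sublist l ∧ d < c ∧ c < a ∧ a < e ∧ e < b := by
  constructor
  · rintro ⟨u, hs, hl, h⟩
    obtain ⟨a,b,c,d,e, rfl⟩ := len5 hl
    refine ⟨a,b,c,d,e, hs, ?_⟩
    refine ⟨?_, ?_, ?_, ?_⟩
    · have := h 3 2 (by norm_num) (by norm_num); simp [List.getD] at this; omega
    · have := h 2 0 (by norm_num) (by norm_num); simp [List.getD] at this; omega
    · have := h 0 4 (by norm_num) (by norm_num); simp [List.getD] at this; omega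
    · have := h 4 1 (by norm_num) (by norm_num); simp [List.getD] at this; omega
  · rintro ⟨a,b,c,d,e, hs, hc⟩
    refine ⟨[a,b,c,d,e], hs, rfl, ?_⟩
    intro i j hi hj
    simp only [List.length_cons, List.length_nil] at hi hj
    interval_cases i <;> interval_cases j <;> simp [List.getD] <;> omega

lemma pat_41532 {l : List ℕ} : Pat [4,1,5,3,2] l ↔
    ∃ a b c d e, [a,b,c,d,e].Sublist l ∧ b < e ∧ e < d ∧ d < a ∧ a < c := by
  constructor
  · rintro ⟨u, hs, hl, h⟩
    obtain ⟨a,b,c,d,e, rfl⟩ := len5 hl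
    refine ⟨a,b,c,d,e, hs, ?_⟩
    refine ⟨?_, ?_, ?_, ?_⟩
    · have := h 1 4 (by norm_num) (by norm_num); simp [List.getD] at this; omega
    · have := h 4 3 (by norm_num) (by norm_num); simp [List.getD] at this; omega
    · have := h 3 0 (by norm_num) (by norm_num); simp [List.getD] at this; omega
    · have := h 0 2 (by norm_num) (by norm_num); simp [List.getD] at this; omega
  · rintro ⟨a,b,c,d,e, hs, hc⟩
    refine ⟨[a,b,c,d,e], hs, rfl, ?_⟩
    intro i j hi hj
    simp only [List.length_cons, List.length_nil] at hi hj
    interval_cases i <;> interval_cases j <;> simp [List.getD] <;> omega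

lemma pat_43152 {l : List ℕ} : Pat [4,3,1,5,2] l ↔
    ∃ a b c d e, [a,b,c,d,e].Sublist l ∧ c < e ∧ e < b ∧ b < a ∧ a < d := by
  constructor
  · rintro ⟨u, hs, hl, h⟩
    obtain ⟨a,b,c,d,e, rfl⟩ := len5 hl
    refine ⟨a,b,c,d,e, hs, ?_⟩
    refine ⟨?_, ?_, ?_, ?_⟩
    · have := h 2 4 (by norm_num) (by norm_num); simp [List.getD] at this; omega
    · have := h 4 1 (by norm_num) (by norm_num); simp [List.getD] at this; omega
    · have := h 1 0 (by norm_num) (by norm_num); simp [List.getD] at this; omega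
    · have := h 0 3 (by norm_num) (by norm_num); simp [List.getD] at this; omega
  · rintro ⟨a,b,c,d,e, hs, hc⟩
    refine ⟨[a,b,c,d,e], hs, rfl, ?_⟩
    intro i j hi hj
    simp only [List.length_cons, List.length_nil] at hi hj
    interval_cases i <;> interval_cases j <;> simp [List.getD] <;> omega


lemma pat_sublist {β m l : List ℕ} (h : Pat β m) (hs : m.Sublist l) : Pat β l := by
  obtain ⟨u, h1, h2, h3⟩ := h
  exact ⟨u, h1.trans hs, h2, h3⟩

lemma pat_of_long {β l : List ℕ} (h : l.length < β.length) : ¬ Pat β l := by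
  rintro ⟨u, h1, h2, _⟩
  have := h1.length_le
  omega

lemma pat_map_iff {f : ℕ → ℕ} (hf : ∀ x y, f x < f y ↔ x < y) {β l : List ℕ} :
    Pat β (l.map f) ↔ Pat β l := by
  constructor
  · rintro ⟨u, h1, h2, h3⟩
    obtain ⟨u', hu', rfl⟩ := List.sublist_map_iff.mp h1
    rw [List.length_map] at h2
    refine ⟨u', hu', h2, ?_⟩
    intro i j hi hj
    have hi' : i < (u'.map f).length := by simpa using hi
    have hj' : j < (u'.map f).length := by simpa using hj
    have := h3 i j hi' hj'
    rwa [List.getD_eq_getElem _ _ hi', List.getD_eq_getElem _ _ hj',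
      List.getElem_map, List.getElem_map, hf,
      ← List.getD_eq_getElem u' 0 hi, ← List.getD_eq_getElem u' 0 hj] at this
  · rintro ⟨u, h1, h2, h3⟩
    refine ⟨u.map f, h1.map f, by simpa using h2, ?_⟩
    intro i j hi hj
    rw [List.length_map] at hi hj
    rw [List.getD_eq_getElem _ _ (by simpa using hi), List.getD_eq_getElem _ _ (by simpa using hj),
      List.getElem_map, List.getElem_map, hf,
      ← List.getD_eq_getElem u 0 hi, ← List.getD_eq_getElem u 0 hj]
    exact h3 i j hi hj

/-- Stripping a new minimum from the front. -/
lemma pat_strip_min {β l : List ℕ} {a : ℕ} (ha : ∀ v ∈ l, a < v)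
    (hβ : ∃ j, j < β.length ∧ β.getD j 0 < β.getD 0 0)
    (h : Pat β (a :: l)) : Pat β l := by
  obtain ⟨u, h1, h2, h3⟩ := h
  rcases List.sublist_cons_iff.mp h1 with h1' | ⟨u', rfl, hu'⟩
  · exact ⟨u, h1', h2, h3⟩
  · exfalso
    obtain ⟨j, hj, hjlt⟩ := hβ
    have hj' : j < (a :: u').length := by rw [h2]; exact hj
    have h0 : (0:ℕ) < (a :: u').length := by simp
    have hiff := h3 j 0 hj' h0
    simp only [List.getD_cons_zero] at hiff
    have hj0 : j ≠ 0 := by intro hj0; subst hj0; omega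
    obtain ⟨j', rfl⟩ := Nat.exists_eq_succ_of_ne_zero hj0
    have hjl : j' < u'.length := by simpa using hj'
    have hmem : u'.getD j' 0 ∈ l := by
      rw [List.getD_eq_getElem _ _ hjl]; exact hu'.subset (u'.getElem_mem hjl)
    rw [List.getD_cons_succ] at hiff
    have := hiff.mpr hjlt
    have := ha _ hmem
    omega

/-- Stripping a new maximum from the front. -/
lemma pat_strip_max {β l : List ℕ} {a : ℕ} (ha : ∀ v ∈ l, v < a)
    (hβ : ∃ j, j < β.length ∧ β.getD 0 0 < β.getD j 0)
    (h : Pat β (a :: l)) : Pat β l := by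
  obtain ⟨u, h1, h2, h3⟩ := h
  rcases List.sublist_cons_iff.mp h1 with h1' | ⟨u', rfl, hu'⟩
  · exact ⟨u, h1', h2, h3⟩
  · exfalso
    obtain ⟨j, hj, hjlt⟩ := hβ
    have hj' : j < (a :: u').length := by rw [h2]; exact hj
    have h0 : (0:ℕ) < (a :: u').length := by simp
    have := (h3 0 j h0 hj')
    simp only [List.getD_cons_zero] at this
    have hj0 : j ≠ 0 := by intro hj0; subst hj0; simp at this; omega
    obtain ⟨j', rfl⟩ := Nat.exists_eq_succ_of_ne_zero hj0
    have hjl : j' < u'.length := by simpa using hj'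
    have hmem : u'.getD j' 0 ∈ l := by rw [List.getD_eq_getElem _ _ hjl]; exact hu'.subset (u'.getElem_mem hjl)
    rw [List.getD_cons_succ] at this
    have := this.mpr hjlt
    have := ha _ hmem
    omega

lemma merge1 {t : List ℕ} {a y : ℕ} (ha : a ∈ t) (hy : y ∈ t) :
    [a,y].Sublist t ∨ [y,a].Sublist t ∨ a = y := by
  induction t with
  | nil => simp at ha
  | cons h t ih =>
    rcases List.mem_cons.mp ha with rfl | ha'
    · rcases List.mem_cons.mp hy with rfl | hy'
      · exact Or.inr (Or.inr rfl)
      · exact Or.inl ((List.singleton_sublist.mpr hy').cons₂ a)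
    · rcases List.mem_cons.mp hy with rfl | hy'
      · exact Or.inr (Or.inl ((List.singleton_sublist.mpr ha').cons₂ y))
      · rcases ih ha' hy' with h1 | h1 | h1
        · exact Or.inl (h1.cons h)
        · exact Or.inr (Or.inl (h1.cons h))
        · exact Or.inr (Or.inr h1)

lemma merge2 {t : List ℕ} {x y a : ℕ} (hs : [x,y].Sublist t) (ha : a ∈ t) :
    [a,x,y].Sublist t ∨ [x,a,y].Sublist t ∨ [x,y,a].Sublist t ∨ a = x ∨ a = y := by
  induction t with
  | nil => simp at ha
  | cons h t ih =>
    rcases List.sublist_cons_iff.mp hs with hs' | ⟨r, hr, hrs⟩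
    · rcases List.mem_cons.mp ha with rfl | ha'
      · exact Or.inl (hs'.cons₂ a)
      · rcases ih hs' ha' with h1 | h1 | h1 | h1 | h1
        · exact Or.inl (h1.cons h)
        · exact Or.inr (Or.inl (h1.cons h))
        · exact Or.inr (Or.inr (Or.inl (h1.cons h)))
        · exact Or.inr (Or.inr (Or.inr (Or.inl h1)))
        · exact Or.inr (Or.inr (Or.inr (Or.inr h1)))
    · injection hr with e1 e2
      subst e1; subst e2
      rcases List.mem_cons.mp ha with rfl | ha'
      · exact Or.inr (Or.inr (Or.inr (Or.inl rfl)))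
      · rcases merge1 ha' (List.singleton_sublist.mp hrs) with h1 | h1 | h1

        · exact Or.inr (Or.inl (h1.cons₂ x))
        · exact Or.inr (Or.inr (Or.inl (h1.cons₂ x)))
        · exact Or.inr (Or.inr (Or.inr (Or.inr h1)))

lemma merge3 {t : List ℕ} {x y z a : ℕ} (hs : [x,y,z].Sublist t) (ha : a ∈ t) :
    [a,x,y,z].Sublist t ∨ [x,a,y,z].Sublist t ∨ [x,y,a,z].Sublist t ∨
      [x,y,z,a].Sublist t ∨ a = x ∨ a = y ∨ a = z := by
  induction t with
  | nil => simp at ha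
  | cons h t ih =>
    rcases List.sublist_cons_iff.mp hs with hs' | ⟨r, hr, hrs⟩
    · rcases List.mem_cons.mp ha with rfl | ha'
      · exact Or.inl (hs'.cons₂ a)
      · rcases ih hs' ha' with h1 | h1 | h1 | h1 | h1 | h1 | h1
        · exact Or.inl (h1.cons h)
        · exact Or.inr (Or.inl (h1.cons h))
        · exact Or.inr (Or.inr (Or.inl (h1.cons h)))
        · exact Or.inr (Or.inr (Or.inr (Or.inl (h1.cons h))))
        · exact Or.inr (Or.inr (Or.inr (Or.inr (Or.inl h1))))
        · exact Or.inr (Or.inr (Or.inr (Or.inr (Or.inr (Or.inl h1)))))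
        · exact Or.inr (Or.inr (Or.inr (Or.inr (Or.inr (Or.inr h1)))))
    · injection hr with e1 e2
      subst e1; subst e2
      rcases List.mem_cons.mp ha with rfl | ha'
      · exact Or.inr (Or.inr (Or.inr (Or.inr (Or.inl rfl))))
      · rcases merge2 hrs ha' with h1 | h1 | h1 | h1 | h1
        · exact Or.inr (Or.inl (h1.cons₂ x))
        · exact Or.inr (Or.inr (Or.inl (h1.cons₂ x)))
        · exact Or.inr (Or.inr (Or.inr (Or.inl (h1.cons₂ x))))
        · exact Or.inr (Or.inr (Or.inr (Or.inr (Or.inr (Or.inl h1)))))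
        · exact Or.inr (Or.inr (Or.inr (Or.inr (Or.inr (Or.inr h1)))))

def Av10 (l : List ℕ) : Prop :=
  ¬Pat [2,1,4,3] l ∧ ¬Pat [2,4,3,1] l ∧ ¬Pat [3,1,2,4] l ∧ ¬Pat [3,4,1,2] l ∧
  ¬Pat [2,3,5,1,4] l ∧ ¬Pat [2,5,1,3,4] l ∧ ¬Pat [3,1,4,5,2] l ∧
  ¬Pat [3,5,2,1,4] l ∧ ¬Pat [4,1,5,3,2] l ∧ ¬Pat [4,3,1,5,2] l

lemma permList_mem {l : List ℕ} (hl : IsPermList l) (v : ℕ) :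
    v ∈ l ↔ 1 ≤ v ∧ v ≤ l.length := by
  rw [hl.2.mem_iff, List.mem_range'_1]; omega

lemma permList_nodup {l : List ℕ} (hl : IsPermList l) : l.Nodup :=
  hl.2.nodup_iff.mpr (List.nodup_range' (s := 1) (n := l.length))

lemma core {c : ℕ} {r : List ℕ} (hl : IsPermList (c :: r)) (h10 : Av10 (c :: r))
    (hc1 : 1 < c) (hcn : c < (c :: r).length) :
    (¬ Pat [1,3,2] (c :: r) ∧ ¬ Pat [3,1,2] (c :: r)) ∨
      (c :: r) = [2,4,1,3] ∨ (c :: r) = [3,1,4,2] := by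
  obtain ⟨h2143, h2431, h3124, h3412, h23514, h25134, h31452, h35214, h41532, h43152⟩ := h10
  have hnd := permList_nodup hl
  have hcr : c ∉ r := (List.nodup_cons.mp hnd).1
  have hcn' : c < r.length + 1 := by simpa using hcn
  have hmr : ∀ v, 1 ≤ v → v ≤ r.length + 1 → v ≠ c → v ∈ r := by
    intro v h1 h2 h3
    have hv : v ∈ c :: r := (permList_mem hl v).mpr ⟨h1, by simpa using h2⟩
    rcases List.mem_cons.mp hv with rfl | h
    · exact absurd rfl h3
    · exact h
  have hbr : ∀ v ∈ r, 1 ≤ v ∧ v ≤ r.length + 1 ∧ v ≠ c := by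
    intro v hv
    have := (permList_mem hl v).mp (List.mem_cons_of_mem c hv)
    exact ⟨this.1, by simpa using this.2, fun e => hcr (e ▸ hv)⟩
  by_cases Pinv : ∃ x y, [x,y].Sublist r ∧ c < y ∧ y < x
  · -- Case (b): an inversion above c  ⇒  l = [2,4,1,3]
    right; left
    obtain ⟨x, y, hxy, hcy, hyx⟩ := Pinv
    have hxr : x ∈ r := hxy.subset (by simp)
    have hyr : y ∈ r := hxy.subset (by simp)
    have h1r : (1:ℕ) ∈ r := hmr 1 le_rfl (by omega) (by omega)
    have hx1y : [x,1,y].Sublist r := by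
      rcases merge2 hxy h1r with h | h | h | h | h
      · exact absurd (pat_2143.mpr ⟨c,1,x,y, h.cons₂ c, by omega, by omega, by omega⟩) h2143
      · exact h
      · exact absurd (pat_2431.mpr ⟨c,x,y,1, h.cons₂ c, by omega, by omega, by omega⟩) h2431
      · omega
      · omega
    -- every element above c is x or y
    have hA : ∀ a ∈ r, c < a → a = x ∨ a = y := by
      intro a har hca
      by_contra hcon
      push_neg at hcon
      obtain ⟨hax, hay⟩ := hcon
      rcases merge3 hx1y har with h | h | h | h | h | h | h
      · -- [a,x,1,y]
        rcases Nat.lt_trichotomy a x with hax' | hax' | hax'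
        · rcases Nat.lt_trichotomy a y with hay' | hay' | hay'
          · exact h23514 (pat_23514.mpr ⟨c,a,x,1,y,
              h.cons₂ c, by omega, by omega, by omega, by omega⟩)
          · omega
          · exact h3412 (pat_3412.mpr ⟨a,x,1,y, h.cons c, by omega, by omega, by omega⟩)
        · omega
        · have h' : [a,x,1].Sublist r := (by simp : [a,x,1].Sublist [a,x,1,y]).trans h
          exact h2431 (pat_2431.mpr ⟨c,a,x,1, h'.cons₂ c, by omega, by omega, by omega⟩)
      · -- [x,a,1,y]
        rcases Nat.lt_trichotomy a x with hax' | hax' | hax'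
        · have h' : [x,a,1].Sublist r := (by simp : [x,a,1].Sublist [x,a,1,y]).trans h
          exact h2431 (pat_2431.mpr ⟨c,x,a,1, h'.cons₂ c, by omega, by omega, by omega⟩)
        · omega
        · exact h3412 (pat_3412.mpr ⟨x,a,1,y, h.cons c, by omega, by omega, by omega⟩)
      · -- [x,1,a,y]
        rcases Nat.lt_trichotomy a y with hay' | hay' | hay'
        · exact h25134 (pat_25134.mpr ⟨c,x,1,a,y,
            h.cons₂ c, by omega, by omega, by omega, by omega⟩)
        · omega
        · have h' : [1,a,y].Sublist r := (by simp : [1,a,y].Sublist [x,1,a,y]).trans h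
          exact h2143 (pat_2143.mpr ⟨c,1,a,y, h'.cons₂ c, by omega, by omega, by omega⟩)
      · -- [x,1,y,a]
        rcases Nat.lt_trichotomy a y with hay' | hay' | hay'
        · have h' : [1,y,a].Sublist r := (by simp : [1,y,a].Sublist [x,1,y,a]).trans h
          exact h2143 (pat_2143.mpr ⟨c,1,y,a, h'.cons₂ c, by omega, by omega, by omega⟩)
        · omega
        · rcases Nat.lt_trichotomy a x with hax' | hax' | hax'
          · exact h25134 (pat_25134.mpr ⟨c,x,1,y,a,
              h.cons₂ c, by omega, by omega, by omega, by omega⟩)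
          · omega
          · exact h3124 (pat_3124.mpr ⟨x,1,y,a, h.cons c, by omega, by omega, by omega⟩)
      · omega
      · omega
      · omega
    have hxb := hbr x hxr
    have hyb := hbr y hyr
    have hxy1 : y = c + 1 ∧ x = c + 2 := by
      have h1 : c + 1 ∈ r := hmr (c+1) (by omega) (by omega) (by omega)
      have h2 : c + 2 ∈ r := hmr (c+2) (by omega) (by omega) (by omega)
      have := hA (c+1) h1 (by omega)
      have := hA (c+2) h2 (by omega)
      omega
    obtain ⟨rfl, rfl⟩ := hxy1
    -- every element below c is 1
    have hB : ∀ b ∈ r, b < c → b = 1 := by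
      intro b hbrr hbc
      by_contra hb1
      have hb1' : 1 < b := by have := (hbr b hbrr).1; omega
      rcases merge3 hx1y hbrr with h | h | h | h | h | h | h
      · have h' : [b,c+2,c+1].Sublist r := (by simp : [b,c+2,c+1].Sublist [b,c+2,1,c+1]).trans h
        exact h2143 (pat_2143.mpr ⟨c,b,c+2,c+1, h'.cons₂ c, by omega, by omega, by omega⟩)
      · exact h35214 (pat_35214.mpr ⟨c,c+2,b,1,c+1,
          h.cons₂ c, by omega, by omega, by omega, by omega⟩)
      · have h' : [c+2,1,b].Sublist r := (by simp : [c+2,1,b].Sublist [c+2,1,b,c+1]).trans h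
        exact h3412 (pat_3412.mpr ⟨c,c+2,1,b, h'.cons₂ c, by omega, by omega, by omega⟩)
      · have h' : [c+2,c+1,b].Sublist r := (by simp : [c+2,c+1,b].Sublist [c+2,1,c+1,b]).trans h
        exact h2431 (pat_2431.mpr ⟨c,c+2,c+1,b, h'.cons₂ c, by omega, by omega, by omega⟩)
      · omega
      · omega
      · omega
    have hc2 : c = 2 := by
      by_contra hc3
      have h1 : c - 1 ∈ r := hmr (c-1) (by omega) (by omega) (by omega)
      have := hB (c-1) h1 (by omega)
      omega
    subst hc2
    have hn4 : r.length + 1 = 4 := by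
      by_contra hn
      have h5 : (5:ℕ) ∈ r := hmr 5 (by omega) (by omega) (by omega)
      have := hA 5 h5 (by omega)
      omega
    have hrlen : r.length = 3 := by omega
    have : r = [4,1,3] := (hx1y.eq_of_length (by simp [hrlen])).symm ▸ rfl
    rw [show (2+2 : ℕ) = 4 from rfl, show (2+1 : ℕ) = 3 from rfl] at hx1y
    have := hx1y.eq_of_length (by simp [hrlen])
    rw [this]
  · by_cases Pasc : ∃ b y, [b,y].Sublist r ∧ b < y ∧ y < c
    · -- Case (c): an ascent below c ⇒ l = [3,1,4,2]
      right; right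
      push_neg at Pinv
      have hni : ∀ u v, [u,v].Sublist r → c < v → u ≤ v := by
        intro u v h hv
        have := Pinv u v h hv
        omega
      obtain ⟨b, y, hby, hb_y, hyc⟩ := Pasc
      have hbr' : b ∈ r := hby.subset (by simp)
      have hyr' : y ∈ r := hby.subset (by simp)
      have hnr : r.length + 1 ∈ r := hmr (r.length+1) (by omega) le_rfl (by omega)
      set n := r.length + 1 with hn
      have hbny : [b,n,y].Sublist r := by
        rcases merge2 hby hnr with h | h | h | h | h
        · exact absurd (pat_3412.mpr ⟨c,n,b,y, h.cons₂ c, by omega, by omega, by omega⟩) h3412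
        · exact h
        · exact absurd (pat_3124.mpr ⟨c,b,y,n, h.cons₂ c, by omega, by omega, by omega⟩) h3124
        · have := (hbr b hbr').2.1; omega
        · have := (hbr y hyr').2.1; omega
      have hbb := hbr b hbr'
      have hyb := hbr y hyr'
      -- every element below c is b or y
      have hB : ∀ e ∈ r, e < c → e = b ∨ e = y := by
        intro e her hec
        by_contra hcon
        push_neg at hcon
        obtain ⟨heb, hey⟩ := hcon
        have heb' := hbr e her
        rcases merge3 hbny her with h | h | h | h | h | h | h
        · -- [e,b,n,y]
          rcases Nat.lt_trichotomy e b with h' | h' | h'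
          · have h2 : [e,b,n].Sublist r := (by simp : [e,b,n].Sublist [e,b,n,y]).trans h
            exact h3124 (pat_3124.mpr ⟨c,e,b,n, h2.cons₂ c, by omega, by omega, by omega⟩)
          · omega
          · rcases Nat.lt_trichotomy e y with h'' | h'' | h''
            · exact h2143 (pat_2143.mpr ⟨e,b,n,y, h.cons c, by omega, by omega, by omega⟩)
            · omega
            · exact h43152 (pat_43152.mpr ⟨c,e,b,n,y,
                h.cons₂ c, by omega, by omega, by omega, by omega⟩)
        · -- [b,e,n,y]
          rcases Nat.lt_trichotomy e b with h' | h' | h'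
          · exact h2143 (pat_2143.mpr ⟨b,e,n,y, h.cons c, by omega, by omega, by omega⟩)
          · omega
          · have h2 : [b,e,n].Sublist r := (by simp : [b,e,n].Sublist [b,e,n,y]).trans h
            exact h3124 (pat_3124.mpr ⟨c,b,e,n, h2.cons₂ c, by omega, by omega, by omega⟩)
        · -- [b,n,e,y]
          rcases Nat.lt_trichotomy e y with h' | h' | h'
          · have h2 : [n,e,y].Sublist r := (by simp : [n,e,y].Sublist [b,n,e,y]).trans h
            exact h3412 (pat_3412.mpr ⟨c,n,e,y, h2.cons₂ c, by omega, by omega, by omega⟩)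
          · omega
          · exact h41532 (pat_41532.mpr ⟨c,b,n,e,y,
              h.cons₂ c, by omega, by omega, by omega, by omega⟩)
        · -- [b,n,y,e]
          rcases Nat.lt_trichotomy e y with h' | h' | h'
          · rcases Nat.lt_trichotomy e b with h'' | h'' | h''
            · exact h2431 (pat_2431.mpr ⟨b,n,y,e, h.cons c, by omega, by omega, by omega⟩)
            · omega
            · exact h41532 (pat_41532.mpr ⟨c,b,n,y,e,
                h.cons₂ c, by omega, by omega, by omega, by omega⟩)
          · omega
          · have h2 : [n,y,e].Sublist r := (by simp : [n,y,e].Sublist [b,n,y,e]).trans h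
            exact h3412 (pat_3412.mpr ⟨c,n,y,e, h2.cons₂ c, by omega, by omega, by omega⟩)
        · omega
        · omega
        · omega
      have hc3 : c = 3 ∧ b = 1 ∧ y = 2 := by
        have h1 : (1:ℕ) ∈ r := hmr 1 le_rfl (by omega) (by omega)
        have h2 : (2:ℕ) ∈ r := hmr 2 (by omega) (by omega) (by omega)
        have e1 := hB 1 h1 (by omega)
        have e2 := hB 2 h2 (by omega)
        have hc3' : c = 3 := by
          by_contra hc4
          have h3 : c - 1 ∈ r := hmr (c-1) (by omega) (by omega) (by omega)
          have := hB (c-1) h3 (by omega)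
          omega
        exact ⟨hc3', by omega, by omega⟩
      obtain ⟨rfl, rfl, rfl⟩ := hc3
      -- every element above c is n
      have hA : ∀ a ∈ r, 3 < a → a = n := by
        intro a har hca
        by_contra han
        have hab := hbr a har
        rcases merge3 hbny har with h | h | h | h | h | h | h
        · have h2 : [a,1,2].Sublist r := (by simp : [a,1,2].Sublist [a,1,n,2]).trans h
          exact h3412 (pat_3412.mpr ⟨3,a,1,2, h2.cons₂ 3, by omega, by omega, by omega⟩)
        · exact h31452 (pat_31452.mpr ⟨3,1,a,n,2,
            h.cons₂ 3, by omega, by omega, by omega, by omega⟩)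
        · have h2 : [n,a].Sublist r := (by simp : [n,a].Sublist [1,n,a,2]).trans h
          have := hni n a h2 (by omega)
          omega
        · have h2 : [n,a].Sublist r := (by simp : [n,a].Sublist [1,n,2,a]).trans h
          have := hni n a h2 (by omega)
          omega
        · omega
        · omega
        · omega
      have hn4 : n = 4 := by
        by_contra hn5
        have h4 : (4:ℕ) ∈ r := hmr 4 (by omega) (by omega) (by omega)
        have := hA 4 h4 (by omega)
        omega
      rw [hn4] at hbny
      have hrlen : r.length = 3 := by omega
      have := hbny.eq_of_length (by simp [hrlen])
      rw [this]
    · -- Case (a): no inversion above c, no ascent below c ⇒ avoids 132 and 312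
      left
      push_neg at Pinv
      constructor
      · intro hp
        obtain ⟨u1, u2, u3, hs, h13, h32⟩ := pat_132.mp hp
        rcases List.sublist_cons_iff.mp hs with hs' | ⟨r', hr', hrs⟩
        · have hu1r : u1 ∈ r := hs'.subset (by simp)
          have hu1c : u1 ≠ c := (hbr u1 hu1r).2.2
          rcases Nat.lt_trichotomy u1 c with h' | h' | h'
          · rcases Nat.lt_trichotomy u3 c with h'' | h'' | h''
            · have h2 : [u1,u3].Sublist r := (by simp : [u1,u3].Sublist [u1,u2,u3]).trans hs'
              exact Pasc ⟨u1, u3, h2, by omega, by omega⟩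
            · have : u3 ∈ r := hs'.subset (by simp)
              exact (hbr u3 this).2.2 h''
            · have h2 : [u2,u3].Sublist r := (by simp : [u2,u3].Sublist [u1,u2,u3]).trans hs'
              have := Pinv u2 u3 h2 (by omega)
              omega
          · exact hu1c h'
          · have h2 : [u2,u3].Sublist r := (by simp : [u2,u3].Sublist [u1,u2,u3]).trans hs'
            have := Pinv u2 u3 h2 (by omega)
            omega
        · injection hr' with e1 e2
          subst e1; subst e2
          have := Pinv u2 u3 hrs (by omega)
          omega
      · intro hp
        obtain ⟨u1, u2, u3, hs, h23, h31⟩ := pat_312.mp hp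
        rcases List.sublist_cons_iff.mp hs with hs' | ⟨r', hr', hrs⟩
        · have hu1r : u1 ∈ r := hs'.subset (by simp)
          have hu1c : u1 ≠ c := (hbr u1 hu1r).2.2
          rcases Nat.lt_trichotomy u1 c with h' | h' | h'
          · have h2 : [u2,u3].Sublist r := (by simp : [u2,u3].Sublist [u1,u2,u3]).trans hs'
            exact Pasc ⟨u2, u3, h2, by omega, by omega⟩
          · exact hu1c h'
          · rcases Nat.lt_trichotomy u3 c with h'' | h'' | h''
            · have h2 : [u2,u3].Sublist r := (by simp : [u2,u3].Sublist [u1,u2,u3]).trans hs'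
              exact Pasc ⟨u2, u3, h2, by omega, by omega⟩
            · have : u3 ∈ r := hs'.subset (by simp)
              exact (hbr u3 this).2.2 h''
            · have h2 : [u1,u3].Sublist r := (by simp : [u1,u3].Sublist [u1,u2,u3]).trans hs'
              have := Pinv u1 u3 h2 (by omega)
              omega
        · injection hr' with e1 e2
          subst e1; subst e2
          exact Pasc ⟨u2, u3, hrs, by omega, by omega⟩

lemma getLast!_cons {a : ℕ} {s : List ℕ} (hs : s ≠ []) :
    (a :: s).getLast! = s.getLast! := by
  cases s with
  | nil => exact absurd rfl hs
  | cons b s' => simp [List.getLast!, List.getLast]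

lemma getLast!_mem {s : List ℕ} (hs : s ≠ []) : s.getLast! ∈ s := by
  induction s with
  | nil => exact absurd rfl hs
  | cons a s ih =>
    cases s with
    | nil => simp [List.getLast!, List.getLast]
    | cons b s' =>
      rw [getLast!_cons (by simp)]
      exact List.mem_cons_of_mem a (ih (by simp))

lemma getLast!_map_succ {s : List ℕ} (hs : s ≠ []) :
    (s.map (· + 1)).getLast! = s.getLast! + 1 := by
  induction s with
  | nil => exact absurd rfl hs
  | cons a s ih =>
    cases s with
    | nil => simp [List.getLast!, List.getLast]
    | cons b s' =>
      rw [List.map_cons, getLast!_cons (by simp), getLast!_cons (by simp)]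
      exact ih (by simp)

lemma inflate_ne_nil {s t : List ℕ} (ht : t ≠ []) : inflateLast s t ≠ [] := by
  simp [inflateLast, ht]

lemma inflate_length {s t : List ℕ} :
    (inflateLast s t).length = (s.length - 1) + t.length := by
  simp [inflateLast]

lemma inflate_one (t : List ℕ) : inflateLast [1] t = t := by
  simp [inflateLast, List.getLast!, List.getLast]

lemma inflate_cons_min {s t : List ℕ} (hs : s ≠ []) (h2 : ∀ v ∈ s, 2 ≤ v) :
    inflateLast (1 :: s) t = 1 :: inflateLast s t := by
  have hL : s.getLast! ∈ s := getLast!_mem hs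
  have hL2 : 2 ≤ s.getLast! := h2 _ hL
  unfold inflateLast
  rw [getLast!_cons hs, List.dropLast_cons_of_ne_nil hs]
  simp only [List.map_cons, if_pos (by omega : 1 < s.getLast!)]
  rfl

lemma inflate_cons_max {s t : List ℕ} {m : ℕ} (hs : s ≠ []) (ht : t ≠ [])
    (hb : ∀ v ∈ s, v ≤ m) :
    inflateLast ((m+1) :: s) t = (m + t.length) :: inflateLast s t := by
  have hL : s.getLast! ∈ s := getLast!_mem hs
  have hLm : s.getLast! ≤ m := hb _ hL
  have htl : 1 ≤ t.length := by
    cases t with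
    | nil => exact absurd rfl ht
    | cons a t' => simp
  unfold inflateLast
  rw [getLast!_cons hs, List.dropLast_cons_of_ne_nil hs]
  simp only [List.map_cons, if_neg (by omega : ¬ (m+1) < s.getLast!)]
  have : m + 1 + t.length - 1 = m + t.length := by omega
  rw [this]
  rfl

lemma inflate_map_succ {s t : List ℕ} (hs : s ≠ []) (h1 : ∀ v ∈ s, 1 ≤ v)
    (ht : t ≠ []) :
    inflateLast (s.map (· + 1)) t = (inflateLast s t).map (· + 1) := by
  have hL : s.getLast! ∈ s := getLast!_mem hs
  have hL1 : 1 ≤ s.getLast! := h1 _ hL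
  have htl : 1 ≤ t.length := by
    cases t with
    | nil => exact absurd rfl ht
    | cons a t' => simp
  unfold inflateLast
  rw [getLast!_map_succ hs, List.map_append, ← List.map_dropLast, List.map_map,
    List.map_map, List.map_map]
  congr 1
  · apply List.map_congr_left
    intro x hx
    have : x ∈ s := (List.dropLast_sublist s).subset hx
    simp only [Function.comp_apply, List.length_map]
    by_cases hxL : x < s.getLast!
    · rw [if_pos hxL, if_pos (by omega)]
    · rw [if_neg hxL, if_neg (by omega)]
      omega
  · apply List.map_congr_left
    intro y hy
    simp only [Function.comp_apply]
    omega

lemma inflate_lb {s t : List ℕ} {k : ℕ} (hs : s ≠ []) (ht' : t ≠ [])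
    (hk : ∀ v ∈ s, k ≤ v)
    (ht : ∀ v ∈ t, 1 ≤ v) : ∀ v ∈ inflateLast s t, k ≤ v := by
  intro v hv
  have htl : 1 ≤ t.length := by
    cases t with
    | nil => exact absurd rfl ht'
    | cons a t'' => simp
  have hL : s.getLast! ∈ s := getLast!_mem hs
  have hLk : k ≤ s.getLast! := hk _ hL
  rcases List.mem_append.mp hv with h | h
  · obtain ⟨x, hx, rfl⟩ := List.mem_map.mp h
    have : x ∈ s := (List.dropLast_sublist s).subset hx
    have := hk _ this
    split <;> omega
  · obtain ⟨y, hy, rfl⟩ := List.mem_map.mp h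
    have := ht _ hy
    omega

lemma inflate_ub {s t : List ℕ} {m : ℕ} (hs : s ≠ []) (ht' : t ≠ [])
    (h1 : ∀ v ∈ s, 1 ≤ v) (hm : ∀ v ∈ s, v ≤ m)
    (ht : ∀ v ∈ t, v ≤ t.length) : ∀ v ∈ inflateLast s t, v ≤ m + t.length - 1 := by
  intro v hv
  have htl : 1 ≤ t.length := by
    cases t with
    | nil => exact absurd rfl ht'
    | cons a t'' => simp
  have hL : s.getLast! ∈ s := getLast!_mem hs
  have hLm : s.getLast! ≤ m := hm _ hL
  have hL1 : 1 ≤ s.getLast! := h1 _ hL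
  rcases List.mem_append.mp hv with h | h
  · obtain ⟨x, hx, rfl⟩ := List.mem_map.mp h
    have : x ∈ s := (List.dropLast_sublist s).subset hx
    have := hm _ this
    split <;> omega
  · obtain ⟨y, hy, rfl⟩ := List.mem_map.mp h
    have := ht _ hy
    omega

lemma av10_of_sublist {l m : List ℕ} (h : Av10 l) (hs : m.Sublist l) : Av10 m := by
  obtain ⟨h1,h2,h3,h4,h5,h6,h7,h8,h9,h10⟩ := h
  exact ⟨fun hp => h1 (pat_sublist hp hs), fun hp => h2 (pat_sublist hp hs),
    fun hp => h3 (pat_sublist hp hs), fun hp => h4 (pat_sublist hp hs),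
    fun hp => h5 (pat_sublist hp hs), fun hp => h6 (pat_sublist hp hs),
    fun hp => h7 (pat_sublist hp hs), fun hp => h8 (pat_sublist hp hs),
    fun hp => h9 (pat_sublist hp hs), fun hp => h10 (pat_sublist hp hs)⟩

lemma av10_map_succ {l : List ℕ} (h : Av10 l) : Av10 (l.map (· + 1)) := by
  have hf : ∀ x y : ℕ, x + 1 < y + 1 ↔ x < y := by omega
  obtain ⟨h1,h2,h3,h4,h5,h6,h7,h8,h9,h10⟩ := h
  exact ⟨fun hp => h1 ((pat_map_iff hf).mp hp), fun hp => h2 ((pat_map_iff hf).mp hp),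
    fun hp => h3 ((pat_map_iff hf).mp hp), fun hp => h4 ((pat_map_iff hf).mp hp),
    fun hp => h5 ((pat_map_iff hf).mp hp), fun hp => h6 ((pat_map_iff hf).mp hp),
    fun hp => h7 ((pat_map_iff hf).mp hp), fun hp => h8 ((pat_map_iff hf).mp hp),
    fun hp => h9 ((pat_map_iff hf).mp hp), fun hp => h10 ((pat_map_iff hf).mp hp)⟩

lemma av10_map_succ' {l : List ℕ} (h : Av10 (l.map (· + 1))) : Av10 l := by
  have hf : ∀ x y : ℕ, x + 1 < y + 1 ↔ x < y := by omega
  obtain ⟨h1,h2,h3,h4,h5,h6,h7,h8,h9,h10⟩ := h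
  exact ⟨fun hp => h1 ((pat_map_iff hf).mpr hp), fun hp => h2 ((pat_map_iff hf).mpr hp),
    fun hp => h3 ((pat_map_iff hf).mpr hp), fun hp => h4 ((pat_map_iff hf).mpr hp),
    fun hp => h5 ((pat_map_iff hf).mpr hp), fun hp => h6 ((pat_map_iff hf).mpr hp),
    fun hp => h7 ((pat_map_iff hf).mpr hp), fun hp => h8 ((pat_map_iff hf).mpr hp),
    fun hp => h9 ((pat_map_iff hf).mpr hp), fun hp => h10 ((pat_map_iff hf).mpr hp)⟩

lemma av10_cons_min {l : List ℕ} {a : ℕ} (ha : ∀ v ∈ l, a < v) (h : Av10 l) :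
    Av10 (a :: l) := by
  obtain ⟨h1,h2,h3,h4,h5,h6,h7,h8,h9,h10⟩ := h
  refine ⟨?_,?_,?_,?_,?_,?_,?_,?_,?_,?_⟩
  · exact fun hp => h1 (pat_strip_min ha ⟨1, by norm_num, by norm_num⟩ hp)
  · exact fun hp => h2 (pat_strip_min ha ⟨3, by norm_num, by norm_num⟩ hp)
  · exact fun hp => h3 (pat_strip_min ha ⟨1, by norm_num, by norm_num⟩ hp)
  · exact fun hp => h4 (pat_strip_min ha ⟨2, by norm_num, by norm_num⟩ hp)
  · exact fun hp => h5 (pat_strip_min ha ⟨3, by norm_num, by norm_num⟩ hp)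
  · exact fun hp => h6 (pat_strip_min ha ⟨2, by norm_num, by norm_num⟩ hp)
  · exact fun hp => h7 (pat_strip_min ha ⟨1, by norm_num, by norm_num⟩ hp)
  · exact fun hp => h8 (pat_strip_min ha ⟨3, by norm_num, by norm_num⟩ hp)
  · exact fun hp => h9 (pat_strip_min ha ⟨1, by norm_num, by norm_num⟩ hp)
  · exact fun hp => h10 (pat_strip_min ha ⟨2, by norm_num, by norm_num⟩ hp)

lemma av10_cons_max {l : List ℕ} {a : ℕ} (ha : ∀ v ∈ l, v < a) (h : Av10 l) :
    Av10 (a :: l) := by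
  obtain ⟨h1,h2,h3,h4,h5,h6,h7,h8,h9,h10⟩ := h
  refine ⟨?_,?_,?_,?_,?_,?_,?_,?_,?_,?_⟩
  · exact fun hp => h1 (pat_strip_max ha ⟨2, by norm_num, by norm_num⟩ hp)
  · exact fun hp => h2 (pat_strip_max ha ⟨1, by norm_num, by norm_num⟩ hp)
  · exact fun hp => h3 (pat_strip_max ha ⟨3, by norm_num, by norm_num⟩ hp)
  · exact fun hp => h4 (pat_strip_max ha ⟨1, by norm_num, by norm_num⟩ hp)
  · exact fun hp => h5 (pat_strip_max ha ⟨2, by norm_num, by norm_num⟩ hp)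
  · exact fun hp => h6 (pat_strip_max ha ⟨1, by norm_num, by norm_num⟩ hp)
  · exact fun hp => h7 (pat_strip_max ha ⟨3, by norm_num, by norm_num⟩ hp)
  · exact fun hp => h8 (pat_strip_max ha ⟨1, by norm_num, by norm_num⟩ hp)
  · exact fun hp => h9 (pat_strip_max ha ⟨2, by norm_num, by norm_num⟩ hp)
  · exact fun hp => h10 (pat_strip_max ha ⟨3, by norm_num, by norm_num⟩ hp)

lemma av10_of_avV {l : List ℕ} (hV1 : ¬ Pat [1,3,2] l) (hV2 : ¬ Pat [3,1,2] l) :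
    Av10 l := by
  refine ⟨?_,?_,?_,?_,?_,?_,?_,?_,?_,?_⟩
  · rintro hp; obtain ⟨a,b,c,d,hs,k1,k2,k3⟩ := pat_2143.mp hp
    exact hV1 (pat_132.mpr ⟨a,c,d, (by simp : [a,c,d].Sublist [a,b,c,d]).trans hs, by omega, by omega⟩)
  · rintro hp; obtain ⟨a,b,c,d,hs,k1,k2,k3⟩ := pat_2431.mp hp
    exact hV1 (pat_132.mpr ⟨a,b,c, (by simp : [a,b,c].Sublist [a,b,c,d]).trans hs, by omega, by omega⟩)
  · rintro hp; obtain ⟨a,b,c,d,hs,k1,k2,k3⟩ := pat_3124.mp hp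
    exact hV2 (pat_312.mpr ⟨a,b,c, (by simp : [a,b,c].Sublist [a,b,c,d]).trans hs, by omega, by omega⟩)
  · rintro hp; obtain ⟨a,b,c,d,hs,k1,k2,k3⟩ := pat_3412.mp hp
    exact hV2 (pat_312.mpr ⟨a,c,d, (by simp : [a,c,d].Sublist [a,b,c,d]).trans hs, by omega, by omega⟩)
  · rintro hp; obtain ⟨a,b,c,d,e,hs,k1,k2,k3,k4⟩ := pat_23514.mp hp
    exact hV1 (pat_132.mpr ⟨b,c,e, (by simp : [b,c,e].Sublist [a,b,c,d,e]).trans hs, by omega, by omega⟩)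
  · rintro hp; obtain ⟨a,b,c,d,e,hs,k1,k2,k3,k4⟩ := pat_25134.mp hp
    exact hV1 (pat_132.mpr ⟨a,b,d, (by simp : [a,b,d].Sublist [a,b,c,d,e]).trans hs, by omega, by omega⟩)
  · rintro hp; obtain ⟨a,b,c,d,e,hs,k1,k2,k3,k4⟩ := pat_31452.mp hp
    exact hV2 (pat_312.mpr ⟨a,b,e, (by simp : [a,b,e].Sublist [a,b,c,d,e]).trans hs, by omega, by omega⟩)
  · rintro hp; obtain ⟨a,b,c,d,e,hs,k1,k2,k3,k4⟩ := pat_35214.mp hp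
    exact hV1 (pat_132.mpr ⟨a,b,e, (by simp : [a,b,e].Sublist [a,b,c,d,e]).trans hs, by omega, by omega⟩)
  · rintro hp; obtain ⟨a,b,c,d,e,hs,k1,k2,k3,k4⟩ := pat_41532.mp hp
    exact hV2 (pat_312.mpr ⟨a,b,d, (by simp : [a,b,d].Sublist [a,b,c,d,e]).trans hs, by omega, by omega⟩)
  · rintro hp; obtain ⟨a,b,c,d,e,hs,k1,k2,k3,k4⟩ := pat_43152.mp hp
    exact hV2 (pat_312.mpr ⟨b,c,e, (by simp : [b,c,e].Sublist [a,b,c,d,e]).trans hs, by omega, by omega⟩)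

lemma av10_2413 : Av10 [2,4,1,3] := by
  refine ⟨?_,?_,?_,?_,?_,?_,?_,?_,?_,?_⟩
  · rintro hp; obtain ⟨a,b,c,d,hs,k1,k2,k3⟩ := pat_2143.mp hp
    have := hs.eq_of_length (by simp); simp at this; omega
  · rintro hp; obtain ⟨a,b,c,d,hs,k1,k2,k3⟩ := pat_2431.mp hp
    have := hs.eq_of_length (by simp); simp at this; omega
  · rintro hp; obtain ⟨a,b,c,d,hs,k1,k2,k3⟩ := pat_3124.mp hp
    have := hs.eq_of_length (by simp); simp at this; omega
  · rintro hp; obtain ⟨a,b,c,d,hs,k1,k2,k3⟩ := pat_3412.mp hp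
    have := hs.eq_of_length (by simp); simp at this; omega
  · rintro hp; obtain ⟨a,b,c,d,e,hs,k1,k2,k3,k4⟩ := pat_23514.mp hp
    have := hs.length_le; simp at this
  · rintro hp; obtain ⟨a,b,c,d,e,hs,k1,k2,k3,k4⟩ := pat_25134.mp hp
    have := hs.length_le; simp at this
  · rintro hp; obtain ⟨a,b,c,d,e,hs,k1,k2,k3,k4⟩ := pat_31452.mp hp
    have := hs.length_le; simp at this
  · rintro hp; obtain ⟨a,b,c,d,e,hs,k1,k2,k3,k4⟩ := pat_35214.mp hp
    have := hs.length_le; simp at this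
  · rintro hp; obtain ⟨a,b,c,d,e,hs,k1,k2,k3,k4⟩ := pat_41532.mp hp
    have := hs.length_le; simp at this
  · rintro hp; obtain ⟨a,b,c,d,e,hs,k1,k2,k3,k4⟩ := pat_43152.mp hp
    have := hs.length_le; simp at this

lemma av10_3142 : Av10 [3,1,4,2] := by
  refine ⟨?_,?_,?_,?_,?_,?_,?_,?_,?_,?_⟩
  · rintro hp; obtain ⟨a,b,c,d,hs,k1,k2,k3⟩ := pat_2143.mp hp
    have := hs.eq_of_length (by simp); simp at this; omega
  · rintro hp; obtain ⟨a,b,c,d,hs,k1,k2,k3⟩ := pat_2431.mp hp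
    have := hs.eq_of_length (by simp); simp at this; omega
  · rintro hp; obtain ⟨a,b,c,d,hs,k1,k2,k3⟩ := pat_3124.mp hp
    have := hs.eq_of_length (by simp); simp at this; omega
  · rintro hp; obtain ⟨a,b,c,d,hs,k1,k2,k3⟩ := pat_3412.mp hp
    have := hs.eq_of_length (by simp); simp at this; omega
  · rintro hp; obtain ⟨a,b,c,d,e,hs,k1,k2,k3,k4⟩ := pat_23514.mp hp
    have := hs.length_le; simp at this
  · rintro hp; obtain ⟨a,b,c,d,e,hs,k1,k2,k3,k4⟩ := pat_25134.mp hp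
    have := hs.length_le; simp at this
  · rintro hp; obtain ⟨a,b,c,d,e,hs,k1,k2,k3,k4⟩ := pat_31452.mp hp
    have := hs.length_le; simp at this
  · rintro hp; obtain ⟨a,b,c,d,e,hs,k1,k2,k3,k4⟩ := pat_35214.mp hp
    have := hs.length_le; simp at this
  · rintro hp; obtain ⟨a,b,c,d,e,hs,k1,k2,k3,k4⟩ := pat_41532.mp hp
    have := hs.length_le; simp at this
  · rintro hp; obtain ⟨a,b,c,d,e,hs,k1,k2,k3,k4⟩ := pat_43152.mp hp
    have := hs.length_le; simp at this

lemma range'_two {m : ℕ} : List.range' 2 m = (List.range' 1 m).map (· + 1) := by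
  have := List.map_add_range' (a := 1) 1 m 1
  simp only [Nat.add_comm 1] at this
  rw [← this]

lemma permlist_min_tail {r : List ℕ} (h : IsPermList (1 :: r)) (hr : r ≠ []) :
    IsPermList (r.map (· - 1)) ∧ (r.map (· - 1)).map (· + 1) = r ∧ (∀ v ∈ r, 2 ≤ v) := by
  have hp := h.2
  simp only [List.length_cons] at hp
  rw [List.range'_succ] at hp
  have hp' : r.Perm (List.range' 2 r.length) := hp.cons_inv
  have h2 : ∀ v ∈ r, 2 ≤ v := by
    intro v hv
    have := hp'.mem_iff.mp hv
    rw [List.mem_range'_1] at this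
    omega
  refine ⟨⟨by simpa using hr, ?_⟩, ?_, h2⟩
  · have : (r.map (· - 1)).Perm ((List.range' 2 r.length).map (· - 1)) := hp'.map _
    rw [range'_two, List.map_map] at this
    simp only [List.length_map]
    convert this using 2
    rw [show ((· - 1) ∘ (· + 1) : ℕ → ℕ) = id by funext x; simp, List.map_id]
  · rw [List.map_map]
    have : ∀ x ∈ r, ((· + 1) ∘ (· - 1)) x = id x := by
      intro x hx
      have := h2 x hx
      simp only [Function.comp_apply, id_eq]
      omega
    rw [List.map_congr_left this, List.map_id]

lemma permlist_max_tail {r : List ℕ} (h : IsPermList ((r.length + 1) :: r)) (hr : r ≠ []) :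
    IsPermList r ∧ (∀ v ∈ r, v ≤ r.length) := by
  have hp := h.2
  simp only [List.length_cons] at hp
  rw [List.range'_concat] at hp
  simp only [Nat.one_mul, Nat.add_comm 1 r.length] at hp
  have hp2 : ((r.length + 1) :: r).Perm ((r.length+1) :: List.range' 1 r.length) := by
    refine hp.trans ?_
    have := List.perm_middle (a := r.length + 1) (l₁ := List.range' 1 r.length) (l₂ := ([] : List ℕ))
    simp only [List.append_nil] at this
    exact this
  have hp' : r.Perm (List.range' 1 r.length) := hp2.cons_inv
  refine ⟨⟨hr, hp'⟩, ?_⟩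
  intro v hv
  have := hp'.mem_iff.mp hv
  rw [List.mem_range'_1] at this
  omega

lemma permlist_cons_succ {s : List ℕ} (h : IsPermList s) :
    IsPermList (1 :: s.map (· + 1)) := by
  refine ⟨by simp, ?_⟩
  simp only [List.length_cons, List.length_map]
  rw [List.range'_succ]
  refine List.Perm.cons 1 ?_
  have := h.2.map (· + 1)
  rwa [← range'_two] at this

lemma permlist_cons_max {s : List ℕ} (h : IsPermList s) :
    IsPermList ((s.length + 1) :: s) := by
  refine ⟨by simp, ?_⟩
  simp only [List.length_cons]
  rw [List.range'_concat]
  simp only [Nat.one_mul, Nat.add_comm 1 s.length]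
  refine (h.2.cons (s.length+1)).trans ?_
  have := List.perm_middle (a := s.length + 1) (l₁ := List.range' 1 s.length) (l₂ := ([] : List ℕ))
  simpa using this.symm

lemma vup_head {v : ℕ} {rest : List ℕ} (h : IsPermList (v :: rest)) (hr : rest ≠ [])
    (h213 : ¬ Pat [2,1,3] (v :: rest)) (h231 : ¬ Pat [2,3,1] (v :: rest)) :
    v = 1 ∨ v = rest.length + 1 := by
  by_contra hcon
  push_neg at hcon
  obtain ⟨hv1, hvm⟩ := hcon
  have hvb := (permList_mem h v).mp (by simp)
  simp only [List.length_cons] at hvb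
  have hrlen : 1 ≤ rest.length := by
    cases rest with
    | nil => exact absurd rfl hr
    | cons a t => simp
  have h1 : (1:ℕ) ∈ rest := by
    have : (1:ℕ) ∈ v :: rest := (permList_mem h 1).mpr ⟨le_rfl, by simp⟩
    rcases List.mem_cons.mp this with e | hm
    · omega
    · exact hm
  have hm : rest.length + 1 ∈ rest := by
    have : rest.length + 1 ∈ v :: rest := (permList_mem h _).mpr ⟨by omega, by simp⟩
    rcases List.mem_cons.mp this with e | hm
    · omega
    · exact hm
  rcases merge1 h1 hm with hs | hs | hs
  · exact h213 (pat_213.mpr ⟨v, 1, rest.length+1, hs.cons₂ v, by omega, by omega⟩)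
  · exact h231 (pat_231.mpr ⟨v, rest.length+1, 1, hs.cons₂ v, by omega, by omega⟩)
  · omega

lemma hf_succ : ∀ x y : ℕ, x + 1 < y + 1 ↔ x < y := by omega

lemma sup_main : ∀ (k : ℕ) (s t : List ℕ), s.length ≤ k → IsPermList s →
    ¬ Pat [2,1,3] s → ¬ Pat [2,3,1] s → IsPermList t → Av10 t →
    Av10 (inflateLast s t) := by
  intro k
  induction k with
  | zero =>
    intro s t hk hs _ _ _ _
    exact absurd (List.length_eq_zero_iff.mp (Nat.le_zero.mp hk)) hs.1
  | succ k ih =>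
    intro s t hk hs h213 h231 ht h10
    have htne : t ≠ [] := ht.1
    have htb : ∀ v ∈ t, 1 ≤ v ∧ v ≤ t.length :=
      fun v hv => (permList_mem ht v).mp hv
    cases s with
    | nil => exact absurd rfl hs.1
    | cons v rest =>
      cases rest with
      | nil =>
        have hv : v = 1 := by
          have h2 := hs.2
          simp only [List.length_cons, List.length_nil] at h2
          rw [List.range'_one] at h2
          have := List.perm_singleton.mp h2
          injection this
        subst hv
        rw [inflate_one]
        exact h10
      | cons w rest' =>
        have hrne : (w :: rest') ≠ [] := by simp
        rcases vup_head hs hrne h213 h231 with rfl | hv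
        · -- head is the minimum 1
          obtain ⟨hpl', hid, h2⟩ := permlist_min_tail hs hrne
          have hlen' : ((w :: rest').map (· - 1)).length ≤ k := by
            simp only [List.length_map, List.length_cons] at hk ⊢
            omega
          have h213' : ¬ Pat [2,1,3] ((w :: rest').map (· - 1)) := by
            intro hp
            have := (pat_map_iff hf_succ).mpr hp
            rw [hid] at this
            exact h213 (pat_sublist this (List.sublist_cons_self _ _))
          have h231' : ¬ Pat [2,3,1] ((w :: rest').map (· - 1)) := by
            intro hp
            have := (pat_map_iff hf_succ).mpr hp
            rw [hid] at this
            exact h231 (pat_sublist this (List.sublist_cons_self _ _))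
          have hmain := ih _ t hlen' hpl' h213' h231' ht h10
          have hs'1 : ∀ v ∈ (w :: rest').map (· - 1), 1 ≤ v := by
            intro v hv
            exact ((permList_mem hpl' v).mp hv).1
          have hs'ne : (w :: rest').map (· - 1) ≠ [] := by simp
          rw [inflate_cons_min hrne h2, ← hid, inflate_map_succ hs'ne hs'1 htne]
          apply av10_cons_min ?_ (av10_map_succ hmain)
          intro u hu
          obtain ⟨x, hx, rfl⟩ := List.mem_map.mp hu
          have hxlb := inflate_lb hs'ne htne hs'1 (fun v hv => (htb v hv).1) x hx
          show (1:ℕ) < x + 1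
          omega
        · -- head is the maximum
          subst hv
          obtain ⟨hpl', hub⟩ := permlist_max_tail hs hrne
          have h213' : ¬ Pat [2,1,3] (w :: rest') :=
            fun hp => h213 (pat_sublist hp (List.sublist_cons_self _ _))
          have h231' : ¬ Pat [2,3,1] (w :: rest') :=
            fun hp => h231 (pat_sublist hp (List.sublist_cons_self _ _))
          have hlen' : (w :: rest').length ≤ k := by
            simp only [List.length_cons] at hk ⊢
            omega
          have hmain := ih _ t hlen' hpl' h213' h231' ht h10
          rw [inflate_cons_max hrne htne hub]
          apply av10_cons_max ?_ hmain
          have hlb : ∀ v ∈ w :: rest', 1 ≤ v := fun v hv => ((permList_mem hpl' v).mp hv).1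
          have := inflate_ub hrne htne hlb hub (fun v hv => (htb v hv).2)
          intro u hu
          have h1 := this u hu
          have h2 : 1 ≤ t.length := List.length_pos_iff.mpr htne
          omega

lemma sub_main : ∀ (k : ℕ) (l : List ℕ), l.length ≤ k → IsPermList l → Av10 l →
    ∃ s t, IsPermList s ∧ IsPermList t ∧ ¬Pat [2,1,3] s ∧ ¬Pat [2,3,1] s ∧
      ((¬Pat [1,3,2] t ∧ ¬Pat [3,1,2] t) ∨ t = [2,4,1,3] ∨ t = [3,1,4,2]) ∧
      l = inflateLast s t := by
  intro k
  induction k with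
  | zero =>
    intro l hk hl _
    exact absurd (List.length_eq_zero_iff.mp (Nat.le_zero.mp hk)) hl.1
  | succ k ih =>
    intro l hk hl h10
    cases l with
    | nil => exact absurd rfl hl.1
    | cons c r =>
      cases r with
      | nil =>
        have hc : c = 1 := by
          have h2 := hl.2
          simp only [List.length_cons, List.length_nil] at h2
          rw [List.range'_one] at h2
          have := List.perm_singleton.mp h2
          injection this
        subst hc
        exact ⟨[1], [1], by decide, by decide, pat_of_long (by simp), pat_of_long (by simp),
          Or.inl ⟨pat_of_long (by simp), pat_of_long (by simp)⟩, by rw [inflate_one]⟩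
      | cons w rest' =>
        have hrne : (w :: rest') ≠ [] := by simp
        have hbc := (permList_mem hl c).mp (by simp)
        by_cases hc1 : c = 1
        · subst hc1
          obtain ⟨hpl', hid, h2⟩ := permlist_min_tail hl hrne
          have h10r : Av10 (w :: rest') := av10_of_sublist h10 (List.sublist_cons_self _ _)
          have h10' : Av10 ((w :: rest').map (· - 1)) := av10_map_succ' (by rw [hid]; exact h10r)
          have hlen' : ((w :: rest').map (· - 1)).length ≤ k := by
            simp only [List.length_map, List.length_cons] at hk ⊢
            omega
          obtain ⟨s, t, hs, ht, hs213, hs231, htV, heq⟩ := ih _ hlen' hpl' h10'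
          have hsne : s ≠ [] := hs.1
          have hs1 : ∀ v ∈ s, 1 ≤ v := fun v hv => ((permList_mem hs v).mp hv).1
          have hs2 : ∀ v ∈ s.map (· + 1), 2 ≤ v := by
            intro v hv
            obtain ⟨x, hx, rfl⟩ := List.mem_map.mp hv
            have := hs1 x hx
            omega
          refine ⟨1 :: s.map (· + 1), t, permlist_cons_succ hs, ht, ?_, ?_, htV, ?_⟩
          · intro hp
            have := pat_strip_min (fun v hv => by have := hs2 v hv; omega)
              ⟨1, by norm_num, by norm_num⟩ hp
            exact hs213 ((pat_map_iff hf_succ).mp this)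
          · intro hp
            have := pat_strip_min (fun v hv => by have := hs2 v hv; omega)
              ⟨2, by norm_num, by norm_num⟩ hp
            exact hs231 ((pat_map_iff hf_succ).mp this)
          · rw [inflate_cons_min (by simp [hsne]) hs2, inflate_map_succ hsne hs1 ht.1,
              ← heq, hid]
        · by_cases hcm : c = (w :: rest').length + 1
          · subst hcm
            obtain ⟨hpl', hub⟩ := permlist_max_tail hl hrne
            have h10r : Av10 (w :: rest') := av10_of_sublist h10 (List.sublist_cons_self _ _)
            have hlen' : (w :: rest').length ≤ k := by
              simp only [List.length_cons] at hk ⊢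
              omega
            obtain ⟨s, t, hs, ht, hs213, hs231, htV, heq⟩ := ih _ hlen' hpl' h10r
            have hsne : s ≠ [] := hs.1
            have hslb : 1 ≤ s.length := List.length_pos_iff.mpr hsne
            have hsub : ∀ v ∈ s, v ≤ s.length := fun v hv => ((permList_mem hs v).mp hv).2
            refine ⟨(s.length + 1) :: s, t, permlist_cons_max hs, ht, ?_, ?_, htV, ?_⟩
            · intro hp
              exact hs213 (pat_strip_max (fun v hv => by have := hsub v hv; omega)
                ⟨2, by norm_num, by norm_num⟩ hp)
            · intro hp
              exact hs231 (pat_strip_max (fun v hv => by have := hsub v hv; omega)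
                ⟨1, by norm_num, by norm_num⟩ hp)
            · rw [inflate_cons_max hsne ht.1 hsub]
              have hlen2 : (w :: rest').length + 1 = s.length + t.length := by
                have := congrArg List.length heq
                rw [inflate_length] at this
                omega
              rw [← hlen2, heq]
          · have hc1' : 1 < c := by omega
            have hcn : c < (c :: w :: rest').length := by
              have e1 : (c :: w :: rest').length = rest'.length + 2 := by simp
              have e2 : (w :: rest').length = rest'.length + 1 := by simp
              omega
            rcases core hl h10 hc1' hcn with ⟨hA, hB⟩ | heql | heql
            · exact ⟨[1], c :: w :: rest', by decide, hl, pat_of_long (by simp),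
                pat_of_long (by simp), Or.inl ⟨hA, hB⟩, (inflate_one _).symm⟩
            · exact ⟨[1], [2,4,1,3], by decide, by decide, pat_of_long (by simp),
                pat_of_long (by simp), Or.inr (Or.inl rfl), by rw [inflate_one]; exact heql⟩
            · exact ⟨[1], [3,1,4,2], by decide, by decide, pat_of_long (by simp),
                pat_of_long (by simp), Or.inr (Or.inr rfl), by rw [inflate_one]; exact heql⟩

/-- 𝒜₃ consists exactly of the permutations σ[1,…,1,τ] with
σ ∈ Av(213,231) and τ ∈ Av(132,312) ∪ {2413, 3142}. -/
theorem statement_9 :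
    A3 = {π : Permu | ∃ σ τ : Permu, σ ∈ Vup ∧
      (τ ∈ V ∨ τ.val = [2,4,1,3] ∨ τ.val = [3,1,4,2]) ∧
      π.val = inflateLast σ.val τ.val} := by
  ext π
  simp only [Set.mem_setOf_eq]
  constructor
  · intro hmem
    simp only [A3, Av, Set.mem_setOf_eq] at hmem
    have h10 : Av10 π.val := by
      refine ⟨?_,?_,?_,?_,?_,?_,?_,?_,?_,?_⟩
      · exact fun hp => hmem (p [2,1,4,3]) (by simp) hp
      · exact fun hp => hmem (p [2,4,3,1]) (by simp) hp
      · exact fun hp => hmem (p [3,1,2,4]) (by simp) hp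
      · exact fun hp => hmem (p [3,4,1,2]) (by simp) hp
      · exact fun hp => hmem (p [2,3,5,1,4]) (by simp) hp
      · exact fun hp => hmem (p [2,5,1,3,4]) (by simp) hp
      · exact fun hp => hmem (p [3,1,4,5,2]) (by simp) hp
      · exact fun hp => hmem (p [3,5,2,1,4]) (by simp) hp
      · exact fun hp => hmem (p [4,1,5,3,2]) (by simp) hp
      · exact fun hp => hmem (p [4,3,1,5,2]) (by simp) hp
    obtain ⟨s, t, hs, ht, hs213, hs231, htV, heq⟩ :=
      sub_main π.val.length π.val le_rfl π.2 h10
    refine ⟨⟨s, hs⟩, ⟨t, ht⟩, ?_, ?_, heq⟩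
    · simp only [Vup, Av, Set.mem_setOf_eq]
      intro β hβ
      simp only [Set.mem_insert_iff, Set.mem_singleton_iff] at hβ
      rcases hβ with rfl | rfl
      · exact hs213
      · exact hs231
    · rcases htV with ⟨h1, h2⟩ | rfl | rfl
      · left
        simp only [V, Av, Set.mem_setOf_eq]
        intro β hβ
        simp only [Set.mem_insert_iff, Set.mem_singleton_iff] at hβ
        rcases hβ with rfl | rfl
        · exact h1
        · exact h2
      · right; left; rfl
      · right; right; rfl
  · rintro ⟨σ, τ, hσ, hτ, hπ⟩
    simp only [Vup, Av, Set.mem_setOf_eq] at hσ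
    have hσ213 : ¬ Pat [2,1,3] σ.val := hσ (p [2,1,3]) (by simp)
    have hσ231 : ¬ Pat [2,3,1] σ.val := hσ (p [2,3,1]) (by simp)
    have h10t : Av10 τ.val := by
      rcases hτ with hV | he | he
      · simp only [V, Av, Set.mem_setOf_eq] at hV
        exact av10_of_avV (hV (p [1,3,2]) (by simp)) (hV (p [3,1,2]) (by simp))
      · rw [he]; exact av10_2413
      · rw [he]; exact av10_3142
    have h10 : Av10 π.val := by
      rw [hπ]
      exact sup_main σ.val.length σ.val τ.val le_rfl σ.2 hσ213 hσ231 τ.2 h10t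
    obtain ⟨g1,g2,g3,g4,g5,g6,g7,g8,g9,g10⟩ := h10
    simp only [A3, Av, Set.mem_setOf_eq]
    intro β hβ
    simp only [Set.mem_insert_iff, Set.mem_singleton_iff] at hβ
    rcases hβ with rfl|rfl|rfl|rfl|rfl|rfl|rfl|rfl|rfl|rfl
    · exact g1
    · exact g2
    · exact g3
    · exact g4
    · exact g5
    · exact g6
    · exact g7
    · exact g8
    · exact g9
    · exact g10
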